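/- Consider the M-user hybrid-NOMA power minimization problem: given channel gains h_{m,n} > 0 for 1 ≤ n ≤ m ≤ M and target rate R > 0, minimize ∑_{m=1}^{M} ∑_{n=1}^{m} P_{m,n} over nonnegative powers P_{m,n} ≥ 0 subject to, for each m, ∑_{n=1}^{m} log(1 + h_{m,n}P_{m,n}/(1 + ∑_{j=n}^{m-1} h_{j,n}P_{j,n})) ≥ R (natural logarithm). If the pure OMA allocation, given by P_{m,m} = (e^R − 1)/h_{m,m} for all m and P_{m,n} = 0 for all n < m, is a global minimizer of this problem, then h_{m,n} ≤ h_{m,m} for all 1 ≤ n ≤ m−1 and all 1 ≤ m ≤ M. -/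

import Mathlib

/-- Total transmit power of allocation `P` in the `M`-user hybrid-NOMA system. -/
noncomputable def totalPower (M : ℕ) (P : ℕ → ℕ → ℝ) : ℝ :=
  ∑ m ∈ Finset.Icc 1 M, ∑ n ∈ Finset.Icc 1 m, P m n

/-- Feasibility for the `M`-user hybrid-NOMA power minimization problem: all powers are
nonnegative, and each user `m` achieves the target rate `R`, where its rate on subcarrier `n`
is `log (1 + h m n * P m n / (1 + ∑_{j=n}^{m-1} h j n * P j n))` (natural logarithm). -/
noncomputable def Feasible (M : ℕ) (h : ℕ → ℕ → ℝ) (R : ℝ) (P : ℕ → ℕ → ℝ) : Prop :=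
  (∀ m n, 0 ≤ P m n) ∧
  ∀ m ∈ Finset.Icc 1 M,
    R ≤ ∑ n ∈ Finset.Icc 1 m,
      Real.log (1 + h m n * P m n / (1 + ∑ j ∈ Finset.Icc n (m - 1), h j n * P j n))

/-- The pure OMA allocation: `P m m = (e^R - 1)/h m m` and `P m n = 0` for `n ≠ m`. -/
noncomputable def omaAlloc (h : ℕ → ℕ → ℝ) (R : ℝ) : ℕ → ℕ → ℝ :=
  fun m n => if n = m then (Real.exp R - 1) / h m m else 0

/-- If the pure OMA allocation is a global minimizer of the `M`-user hybrid-NOMA power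
minimization problem, then `h m n ≤ h m m` for all `1 ≤ n ≤ m-1`, `1 ≤ m ≤ M`. -/
theorem stmt_0 (M : ℕ) (hM : 1 ≤ M) (h : ℕ → ℕ → ℝ) (R : ℝ) (hR : 0 < R)
    (hpos : ∀ m ∈ Finset.Icc 1 M, ∀ n ∈ Finset.Icc 1 m, 0 < h m n)
    (hfeas : Feasible M h R (omaAlloc h R))
    (hopt : ∀ P, Feasible M h R P → totalPower M (omaAlloc h R) ≤ totalPower M P) :
    ∀ m ∈ Finset.Icc 1 M, ∀ n ∈ Finset.Icc 1 (m - 1), h m n ≤ h m m := by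
  intro m hm n hn
  by_contra hcon
  push_neg at hcon
  rw [Finset.mem_Icc] at hm hn
  obtain ⟨hm1, hmM⟩ := hm
  obtain ⟨hn1, hnm1⟩ := hn
  have hnm : n < m := by omega
  have hne : n ≠ m := by omega
  set E := Real.exp R with hEdef
  have hE1 : 1 < E := by
    rw [hEdef, show (1:ℝ) = Real.exp 0 by simp]
    exact Real.exp_lt_exp.mpr hR
  have hE0 : (0:ℝ) < E := by linarith
  have ha : 0 < h m n :=
    hpos m (Finset.mem_Icc.mpr ⟨hm1, hmM⟩) n (Finset.mem_Icc.mpr ⟨hn1, by omega⟩)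
  have hb : 0 < h m m :=
    hpos m (Finset.mem_Icc.mpr ⟨hm1, hmM⟩) m (Finset.mem_Icc.mpr ⟨hm1, le_refl m⟩)
  have hnn : 0 < h n n :=
    hpos n (Finset.mem_Icc.mpr ⟨hn1, by omega⟩) n (Finset.mem_Icc.mpr ⟨hn1, le_refl n⟩)
  set a := h m n with hadef
  set b := h m m with hbdef
  set t := min ((a - b)/(2*b)) (E - 1) with htdef
  have ht0 : 0 < t := lt_min (div_pos (by linarith) (by linarith)) (by linarith)
  have htE : t ≤ E - 1 := min_le_right _ _
  have htab : b * (1 + t) < a := by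
    have h1 : t ≤ (a - b)/(2*b) := min_le_left _ _
    rw [le_div_iff₀ (by linarith)] at h1
    nlinarith
  have h1t : (0:ℝ) < 1 + t := by linarith
  set x := E * t / a with hxdef
  set y := (E/(1+t) - 1)/b with hydef
  have hx : 0 < x := div_pos (mul_pos hE0 ht0) ha
  have hy : 0 ≤ y := by
    apply div_nonneg _ hb.le
    have h2 : 1 ≤ E/(1+t) := (le_div_iff₀ h1t).mpr (by linarith)
    linarith
  have hby : 1 + b*y = E/(1+t) := by
    rw [hydef]; field_simp; ring
  set c := (E - 1)/b with hcdef
  have hxy : x + y < c := by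
    have h2 : x < E*t/(b*(1+t)) :=
      div_lt_div_of_pos_left (mul_pos hE0 ht0) (by positivity) htab
    have h3 : E*t/(b*(1+t)) = c - y := by
      rw [hydef, hcdef]; field_simp; ring
    linarith
  set P' : ℕ → ℕ → ℝ := fun m' n' =>
    if m' = m ∧ n' = n then x else if m' = m ∧ n' = m then y else omaAlloc h R m' n'
    with hP'
  have hP'nonneg : ∀ m' n', 0 ≤ P' m' n' := by
    intro m' n'
    simp only [hP']
    split_ifs
    · exact hx.le
    · exact hy
    · exact hfeas.1 m' n'
  have hP'mn : P' m n = x := by simp [hP']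
  have hP'mm : P' m m = y := by simp [hP', Ne.symm hne]
  have hP'other : ∀ m' n', m' ≠ m → P' m' n' = omaAlloc h R m' n' := by
    intro m' n' hm'm; simp [hP', hm'm]
  have hIccEmpty : ∀ k : ℕ, 1 ≤ k → Finset.Icc k (k-1) = ∅ :=
    fun k hk => Finset.Icc_eq_empty (by omega)
  have homc : omaAlloc h R m m = c := by simp [omaAlloc, hcdef, hEdef, hbdef]
  -- rate achieved by user m under P'
  have hrate_m : ∑ n' ∈ Finset.Icc 1 m,
      Real.log (1 + h m n' * P' m n' /
        (1 + ∑ j ∈ Finset.Icc n' (m-1), h j n' * P' j n')) = R := by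
    have step : ∀ n' ∈ Finset.Icc 1 m,
        Real.log (1 + h m n' * P' m n' /
          (1 + ∑ j ∈ Finset.Icc n' (m-1), h j n' * P' j n'))
        = (if n' = n then Real.log (1+t) else 0)
          + (if n' = m then Real.log (E/(1+t)) else 0) := by
      intro n' hn'
      rcases eq_or_ne n' n with rfl | hne1
      · rw [if_pos rfl, if_neg hne, add_zero]
        have hD : ∑ j ∈ Finset.Icc n' (m-1), h j n' * P' j n' = E - 1 := by
          rw [Finset.sum_eq_single_of_mem n' (Finset.mem_Icc.mpr ⟨le_refl n', by omega⟩)]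
          · have h4 : P' n' n' = (E-1)/h n' n' := by
              simp only [hP']
              split_ifs with h4a h4b
              · exact absurd h4a.1 hne
              · exact absurd h4b.1 hne
              · simp [omaAlloc, hEdef]
            rw [h4]
            field_simp
          · intro j hj hjn
            have hjm : j ≠ m := by
              rw [Finset.mem_Icc] at hj; omega
            have h5 : P' j n' = 0 := by simp [hP', hjm, omaAlloc, Ne.symm hjn]
            rw [h5, mul_zero]
        rw [hP'mn, hD]
        congr 1
        have h6 : a * x / (1 + (E - 1)) = t := by
          rw [hxdef]; field_simp; rw [add_sub_cancel, div_self hE0.ne']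
        rw [h6]
      · rcases eq_or_ne n' m with rfl | hne2
        · rw [if_neg hne1, if_pos rfl, zero_add]
          rw [hIccEmpty n' hm1, Finset.sum_empty, hP'mm]
          have h8 : (1:ℝ) + b * y / (1 + 0) = E/(1+t) := by
            rw [add_zero, div_one]; exact hby
          rw [h8]
        · rw [if_neg hne1, if_neg hne2]
          have h7 : P' m n' = 0 := by simp [hP', hne1, omaAlloc, hne2]
          rw [h7, mul_zero, zero_div, add_zero, Real.log_one, add_zero]
    rw [Finset.sum_congr rfl step, Finset.sum_add_distrib,
      Finset.sum_ite_eq' (Finset.Icc 1 m) n fun _ => Real.log (1+t),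
      Finset.sum_ite_eq' (Finset.Icc 1 m) m fun _ => Real.log (E/(1+t)),
      if_pos (Finset.mem_Icc.mpr ⟨hn1, hnm.le⟩),
      if_pos (Finset.mem_Icc.mpr ⟨hm1, le_refl m⟩),
      ← Real.log_mul (by positivity) (by positivity)]
    rw [show (1+t) * (E/(1+t)) = E by field_simp]
    exact Real.log_exp R
  -- rates of other users unchanged
  have hrate_other : ∀ m', m' ∈ Finset.Icc 1 M → m' ≠ m →
      ∑ n' ∈ Finset.Icc 1 m', Real.log (1 + h m' n' * P' m' n' /
        (1 + ∑ j ∈ Finset.Icc n' (m'-1), h j n' * P' j n'))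
      = ∑ n' ∈ Finset.Icc 1 m', Real.log (1 + h m' n' * omaAlloc h R m' n' /
        (1 + ∑ j ∈ Finset.Icc n' (m'-1), h j n' * omaAlloc h R j n')) := by
    intro m' hm' hm'm
    have hm'1 : 1 ≤ m' := (Finset.mem_Icc.mp hm').1
    apply Finset.sum_congr rfl
    intro n' hn'
    rcases eq_or_ne n' m' with rfl | hne'
    · simp only [hIccEmpty n' hm'1, Finset.sum_empty, hP'other n' n' hm'm]
    · have hP0 : P' m' n' = 0 := by simp [hP', hm'm, omaAlloc, hne']
      have hO0 : omaAlloc h R m' n' = 0 := by simp [omaAlloc, hne']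
      rw [hP0, hO0, mul_zero, zero_div, zero_div]
  have hP'feas : Feasible M h R P' := by
    refine ⟨hP'nonneg, ?_⟩
    intro m' hm'
    rcases eq_or_ne m' m with rfl | hm'm
    · rw [hrate_m]
    · rw [hrate_other m' hm' hm'm]
      exact hfeas.2 m' hm'
  -- total power comparison
  have hdiff : totalPower M P' = totalPower M (omaAlloc h R) + (x + y - c) := by
    unfold totalPower
    have key : ∀ m' ∈ Finset.Icc 1 M, ∑ n' ∈ Finset.Icc 1 m', P' m' n'
        = ∑ n' ∈ Finset.Icc 1 m', omaAlloc h R m' n'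
          + (if m' = m then x + y - c else 0) := by
      intro m' hm'
      rcases eq_or_ne m' m with heq | hm'm
      · subst m'
        rw [if_pos rfl]
        have step : ∀ n' ∈ Finset.Icc 1 m, P' m n'
            = omaAlloc h R m n'
              + ((if n' = n then x else 0) + (if n' = m then y - c else 0)) := by
          intro n' hn'
          rcases eq_or_ne n' n with rfl | hne1
          · rw [if_pos rfl, if_neg hne, hP'mn]
            have : omaAlloc h R m n' = 0 := by simp [omaAlloc, hne]
            rw [this]; ring
          · rcases eq_or_ne n' m with rfl | hne2
            · rw [if_neg hne1, if_pos rfl, hP'mm, homc]; ring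
            · rw [if_neg hne1, if_neg hne2]
              have h9 : P' m n' = omaAlloc h R m n' := by
                simp [hP', hne1, hne2]
              rw [h9]; ring
        rw [Finset.sum_congr rfl step, Finset.sum_add_distrib, Finset.sum_add_distrib,
          Finset.sum_ite_eq' (Finset.Icc 1 m) n fun _ => x,
          Finset.sum_ite_eq' (Finset.Icc 1 m) m fun _ => y - c,
          if_pos (Finset.mem_Icc.mpr ⟨hn1, hnm.le⟩),
          if_pos (Finset.mem_Icc.mpr ⟨hm1, le_refl m⟩)]
        ring
      · rw [if_neg hm'm, add_zero]
        exact Finset.sum_congr rfl fun n' _ => hP'other m' n' hm'm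
    rw [Finset.sum_congr rfl key, Finset.sum_add_distrib,
      Finset.sum_ite_eq' (Finset.Icc 1 M) m fun _ => x + y - c,
      if_pos (Finset.mem_Icc.mpr ⟨hm1, hmM⟩)]
  have hle := hopt P' hP'feas
  rw [hdiff] at hle
  linarith
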